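/- Setting v_j = v^j/j! in the dual generating function yields the identity ∑_{x:|x|=N} multinomial(N;n^+)^{-1} multinomial(N;x) Q_n(x;ũ) v^{∑_j j x_j} / ∏_j (j!)^{x_j} = ∏_{k=1}^N (∑_{j≥0} Q_j(z_k) v^j/j!), where n_l = |{k : z_k = ζ_l}|; consequently, if the polynomials Q_j belong to the Meixner class with generating function h(v) e^{z u(v)} = ∑_j Q_j(z) v^j/j!, then multinomial(N;n)^{-1} ∑_{x: ∑_j j x_j = m} multinomial(N;x) (m!/∏_j (j!)^{x_j}) Q_n(x;ũ) = Q_m^N(|z|), where Q_m^N is defined by h(v)^N e^{|z| u(v)} = ∑_m Q_m^N(|z|) v^m/m!. -/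

import Mathlib

open MvPolynomial Nat

/-- Generalized multivariate Krawtchouk polynomial `Q_n(x;u)` for a (not necessarily
normalized) basis `u`: the coefficient of `∏_{l≠0} w_l^{n_l}` in
`∏_j (u_j^{(0)} + ∑_{l≠0} w_l u_j^{(l)})^{x_j}`. -/
noncomputable def QKgen (D : ℕ) [NeZero D] (u : Fin D → Fin D → ℝ)
    (n x : Fin D → ℕ) : ℝ :=
  MvPolynomial.coeff
    (Finsupp.equivFunOnFinite.symm (fun l => if l = 0 then 0 else n l))
    (∏ j, (MvPolynomial.C (u 0 j) +
      ∑ l ∈ Finset.univ.erase 0, MvPolynomial.X l * MvPolynomial.C (u l j)) ^ x j)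

lemma prod_X_pow_univ {σ : Type*} [Fintype σ] [DecidableEq σ] {R : Type*} [CommSemiring R]
    (s : σ →₀ ℕ) :
    ∏ x : σ, (MvPolynomial.X x : MvPolynomial σ R) ^ s x = MvPolynomial.monomial s 1 := by
  rw [← MvPolynomial.prod_X_pow_eq_monomial]
  exact (Finset.prod_subset (Finset.subset_univ _) (fun x _ hx => by
    rw [Finsupp.notMem_support_iff.mp hx, pow_zero])).symm

lemma lowcoeff {ι : Type*} (m : ℕ) :
    ∀ (s : Finset ι) (f g : ι → PowerSeries ℝ),
      (∀ k ∈ s, ∀ i ≤ m, PowerSeries.coeff i (f k) = PowerSeries.coeff i (g k)) →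
      ∀ i ≤ m, PowerSeries.coeff i (∏ k ∈ s, f k) = PowerSeries.coeff i (∏ k ∈ s, g k) := by
  classical
  intro s
  induction s using Finset.induction_on with
  | empty => intro f g _ i _; simp
  | @insert a s ha ih =>
    intro f g hfg i hi
    rw [Finset.prod_insert ha, Finset.prod_insert ha, PowerSeries.coeff_mul, PowerSeries.coeff_mul]
    refine Finset.sum_congr rfl fun p hp => ?_
    rw [Finset.HasAntidiagonal.mem_antidiagonal] at hp
    have h1 : p.1 ≤ m := le_trans (by omega) hi
    have h2 : p.2 ≤ m := le_trans (by omega) hi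
    rw [hfg _ (Finset.mem_insert_self _ _) _ h1,
      ih f g (fun k hk => hfg k (Finset.mem_insert_of_mem hk)) _ h2]


open scoped Classical in
/-- Theorem 11: setting `v_j = v^j/j!` in the dual generating function gives
`∑_{x:|x|=N} multinomial(N;n)⁻¹ multinomial(N;x) Q_n(x;ũ) v^{∑ j x_j}/∏ (j!)^{x_j}
  = ∏_{k=1}^N ∑_j Q_j(z_k) v^j/j!`, and consequently, for polynomials of Meixner type
(`∑_j Q_j(z) v^j/j! = h(v) E_z(v)` with `E` multiplicative in `z`), the spectral
polynomials aggregate to `Q_m^N(|z|)` defined by `h^N E_{|z|}`. -/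
theorem dual_krawtchouk_meixner_identity
    (D N : ℕ) [NeZero D] (hD : 2 ≤ D)
    (ζ : Fin D → ℝ) (hζ : Function.Injective ζ)
    (Qp : ℕ → ℝ → ℝ) (hQ0 : ∀ zz, Qp 0 zz = 1)
    (z : Fin N → ℝ) (hz : ∀ k, ∃ l : Fin D, z k = ζ l)
    (n : Fin D → ℕ)
    (hn : ∀ l, n l = (Finset.univ.filter (fun k => z k = ζ l)).card)
    (h : PowerSeries ℝ) (hh : PowerSeries.constantCoeff h = 1)
    (E : ℝ → PowerSeries ℝ) (hE0 : E 0 = 1)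
    (hEadd : ∀ a b, E (a + b) = E a * E b)
    (hMeixner : ∀ zz j, PowerSeries.coeff j (h * E zz) = Qp j zz / (j ! : ℝ)) :
    (∀ v : ℝ,
      ∑ x ∈ Finset.Nat.antidiagonalTuple D N,
          ((Nat.multinomial Finset.univ n : ℝ))⁻¹ *
            (Nat.multinomial Finset.univ x : ℝ) *
            QKgen D (fun (l j : Fin D) => Qp (j : ℕ) (ζ l)) n x *
            (v ^ (∑ j : Fin D, (j : ℕ) * x j) / ∏ j : Fin D, (((j : ℕ)! : ℝ)) ^ x j) =
        ∏ k, ∑ j : Fin D, Qp (j : ℕ) (z k) * v ^ (j : ℕ) / ((j : ℕ)! : ℝ)) ∧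
    (∀ m : ℕ, m < D →
      ((Nat.multinomial Finset.univ n : ℝ))⁻¹ *
          ∑ x ∈ (Finset.Nat.antidiagonalTuple D N).filter
              (fun x => ∑ j : Fin D, (j : ℕ) * x j = m),
            (Nat.multinomial Finset.univ x : ℝ) *
              ((m ! : ℝ) / ∏ j : Fin D, (((j : ℕ)! : ℝ)) ^ x j) *
              QKgen D (fun (l j : Fin D) => Qp (j : ℕ) (ζ l)) n x =
        (m ! : ℝ) * PowerSeries.coeff m (h ^ N * E (∑ k, z k))) := by
  classical
  set u : Fin D → Fin D → ℝ := fun (l j : Fin D) => Qp (j : ℕ) (ζ l) with hu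
  set ν : Fin D →₀ ℕ := Finsupp.equivFunOnFinite.symm (fun l => if l = 0 then 0 else n l) with hν
  -- fiber map
  set f : Fin N → Fin D := fun k => (hz k).choose with hf
  have hfz : ∀ k, z k = ζ (f k) := fun k => (hz k).choose_spec
  have hfilter : ∀ l : Fin D,
      (Finset.univ.filter (fun k => z k = ζ l)) = (Finset.univ.filter (fun k => f k = l)) := by
    intro l
    apply Finset.filter_congr
    intro k _
    constructor
    · intro hk; exact hζ (by rw [← hfz k, hk])
    · intro hk; rw [hfz k, hk]
  have hsum_n : ∑ l, n l = N := by
    have hcard := Finset.card_eq_sum_card_fiberwise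
      (f := f) (s := (Finset.univ : Finset (Fin N))) (t := Finset.univ)
      (fun k _ => Finset.mem_univ _)
    simp only [Finset.card_univ, Fintype.card_fin] at hcard
    calc ∑ l, n l = ∑ l, (Finset.univ.filter (fun k => f k = l)).card := by
          refine Finset.sum_congr rfl fun l _ => ?_
          rw [hn l, hfilter l]
      _ = N := hcard.symm
  have hmultn_ne : ((Nat.multinomial Finset.univ n : ℝ)) ≠ 0 := by
    exact_mod_cast (Nat.multinomial_pos _ _).ne'
  have hAT : Finset.piAntidiag (Finset.univ : Finset (Fin D)) N
      = Finset.Nat.antidiagonalTuple D N := by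
    ext x
    simp [Finset.mem_piAntidiag, Finset.Nat.mem_antidiagonalTuple]
  -- the key generating identity
  have key : ∀ v : ℝ,
      ∑ x ∈ Finset.Nat.antidiagonalTuple D N,
        (Nat.multinomial Finset.univ x : ℝ) * QKgen D u n x *
          (v ^ (∑ j : Fin D, (j : ℕ) * x j) / ∏ j : Fin D, (((j : ℕ)! : ℝ)) ^ x j) =
      (Nat.multinomial Finset.univ n : ℝ) *
        ∏ k, ∑ j : Fin D, Qp (j : ℕ) (z k) * v ^ (j : ℕ) / ((j : ℕ)! : ℝ) := by
    intro v
    set c : Fin D → ℝ := fun j => v ^ (j : ℕ) / ((j : ℕ)! : ℝ) with hc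
    set A : Fin D → MvPolynomial (Fin D) ℝ := fun j =>
      MvPolynomial.C (u 0 j) +
        ∑ l ∈ Finset.univ.erase 0, MvPolynomial.X l * MvPolynomial.C (u l j) with hA
    set S : Fin D → ℝ := fun l => ∑ j : Fin D, c j * u l j with hS
    set B : MvPolynomial (Fin D) ℝ := ∑ j, MvPolynomial.C (c j) * A j with hB
    have hQK : ∀ x : Fin D → ℕ,
        QKgen D u n x = MvPolynomial.coeff ν (∏ j, A j ^ x j) := fun x => rfl
    have hcprod : ∀ x : Fin D → ℕ,
        ∏ j, c j ^ x j =
          v ^ (∑ j : Fin D, (j : ℕ) * x j) / ∏ j : Fin D, (((j : ℕ)! : ℝ)) ^ x j := by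
      intro x
      rw [eq_div_iff]
      · rw [← Finset.prod_mul_distrib, ← Finset.prod_pow_eq_pow_sum]
        refine Finset.prod_congr rfl fun j _ => ?_
        rw [hc, div_pow, pow_mul]
        field_simp
      · exact Finset.prod_ne_zero_iff.mpr fun j _ =>
          pow_ne_zero _ (Nat.cast_ne_zero.mpr (Nat.factorial_ne_zero _))
    have hL : MvPolynomial.coeff ν (B ^ N) =
        ∑ x ∈ Finset.Nat.antidiagonalTuple D N,
          (Nat.multinomial Finset.univ x : ℝ) * QKgen D u n x *
            (v ^ (∑ j : Fin D, (j : ℕ) * x j) /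
              ∏ j : Fin D, (((j : ℕ)! : ℝ)) ^ x j) := by
      rw [hB, Finset.sum_pow_eq_sum_piAntidiag, hAT, MvPolynomial.coeff_sum]
      refine Finset.sum_congr rfl fun x hx => ?_
      have hx1 : ∏ j, (MvPolynomial.C (c j) * A j) ^ x j
          = MvPolynomial.C (∏ j, c j ^ x j) * ∏ j, A j ^ x j := by
        rw [map_prod, ← Finset.prod_mul_distrib]
        exact Finset.prod_congr rfl fun j _ => by rw [map_pow, mul_pow]
      rw [hx1, ← mul_assoc, ← map_natCast (MvPolynomial.C (σ := Fin D) (R := ℝ)),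
        ← map_mul, MvPolynomial.coeff_C_mul, hQK, hcprod]
      ring
    have hR : MvPolynomial.coeff ν (B ^ N) =
        (Nat.multinomial Finset.univ n : ℝ) * ∏ l, S l ^ n l := by
      set W : Fin D → MvPolynomial (Fin D) ℝ :=
        fun l => if l = 0 then 1 else MvPolynomial.X l with hW
      have hBT : B = ∑ l : Fin D, MvPolynomial.C (S l) * W l := by
        have hsplit : ∑ l : Fin D, MvPolynomial.C (S l) * W l
            = MvPolynomial.C (S 0) +
              ∑ l ∈ Finset.univ.erase 0, MvPolynomial.C (S l) * MvPolynomial.X l := by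
          rw [← Finset.add_sum_erase _ (fun l => MvPolynomial.C (S l) * W l)
            (Finset.mem_univ (0 : Fin D))]
          congr 1
          · rw [hW]; simp
          · exact Finset.sum_congr rfl fun l hl => by
              rw [hW]; simp [(Finset.mem_erase.mp hl).1]
        rw [hsplit, hB]
        simp only [hA, mul_add, Finset.mul_sum, Finset.sum_add_distrib]
        congr 1
        · simp only [hS, map_sum, map_mul]
        · rw [Finset.sum_comm]
          refine Finset.sum_congr rfl fun l hl => ?_
          rw [hS, map_sum, Finset.sum_mul]
          exact Finset.sum_congr rfl fun j _ => by rw [map_mul]; ring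
      have hterm : ∀ mf : Fin D → ℕ,
          ∏ l, (MvPolynomial.C (S l) * W l) ^ mf l
            = MvPolynomial.C (∏ l, S l ^ mf l) *
              MvPolynomial.monomial
                (Finsupp.equivFunOnFinite.symm (fun l => if l = 0 then 0 else mf l)) 1 := by
        intro mf
        have hWprod : ∏ l, W l ^ mf l
            = ∏ l, MvPolynomial.X l ^
                ((Finsupp.equivFunOnFinite.symm
                  (fun l => if l = 0 then 0 else mf l) : Fin D →₀ ℕ) l) := by
          refine Finset.prod_congr rfl fun l _ => ?_
          rw [hW]
          by_cases hl : l = 0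
          · subst hl; simp
          · simp [hl]
        calc ∏ l, (MvPolynomial.C (S l) * W l) ^ mf l
            = ∏ l, (MvPolynomial.C (S l) ^ mf l * W l ^ mf l) :=
              Finset.prod_congr rfl fun l _ => mul_pow _ _ _
          _ = (∏ l, MvPolynomial.C (S l) ^ mf l) * ∏ l, W l ^ mf l :=
              Finset.prod_mul_distrib
          _ = MvPolynomial.C (∏ l, S l ^ mf l) *
              MvPolynomial.monomial
                (Finsupp.equivFunOnFinite.symm (fun l => if l = 0 then 0 else mf l)) 1 := by
              rw [hWprod, prod_X_pow_univ]
              refine congrArg₂ _ ?_ rfl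
              rw [map_prod]
              exact Finset.prod_congr rfl fun l _ => by rw [map_pow]
      rw [hBT, Finset.sum_pow_eq_sum_piAntidiag, MvPolynomial.coeff_sum]
      have hcollapse : ∀ mf ∈ Finset.piAntidiag (Finset.univ : Finset (Fin D)) N,
          mf ≠ n →
          MvPolynomial.coeff ν
            ((Nat.multinomial Finset.univ mf : MvPolynomial (Fin D) ℝ) *
              ∏ l, (MvPolynomial.C (S l) * W l) ^ mf l) = 0 := by
        intro mf hmf hmfn
        rw [hterm, ← mul_assoc, ← map_natCast (MvPolynomial.C (σ := Fin D) (R := ℝ)),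
          ← map_mul, MvPolynomial.coeff_C_mul, MvPolynomial.coeff_monomial]
        rw [if_neg, mul_zero]
        intro hcontra
        apply hmfn
        have hfuns := Finsupp.equivFunOnFinite.symm.injective (hν ▸ hcontra)
        have hne : ∀ l : Fin D, l ≠ 0 → mf l = n l := by
          intro l hl
          have := congrFun hfuns l
          simpa [hl] using this
        have hsum_mf : ∑ l, mf l = N := (Finset.mem_piAntidiag.mp hmf).1
        have h0 : mf 0 = n 0 := by
          have e1 := Finset.add_sum_erase Finset.univ mf (Finset.mem_univ (0 : Fin D))
          have e2 := Finset.add_sum_erase Finset.univ n (Finset.mem_univ (0 : Fin D))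
          have e3 : ∑ l ∈ Finset.univ.erase 0, mf l = ∑ l ∈ Finset.univ.erase 0, n l :=
            Finset.sum_congr rfl fun l hl => hne l (Finset.mem_erase.mp hl).1
          omega
        funext l
        by_cases hl : l = 0
        · rw [hl]; exact h0
        · exact hne l hl
      rw [Finset.sum_eq_single_of_mem n (by
          rw [Finset.mem_piAntidiag]
          exact ⟨hsum_n, fun i _ => Finset.mem_univ i⟩) hcollapse]
      rw [hterm, ← mul_assoc, ← map_natCast (MvPolynomial.C (σ := Fin D) (R := ℝ)),
        ← map_mul, MvPolynomial.coeff_C_mul, MvPolynomial.coeff_monomial, hν, if_pos rfl,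
        mul_one]
    have hgroup : ∏ l, S l ^ n l
        = ∏ k, ∑ j : Fin D, Qp (j : ℕ) (z k) * v ^ (j : ℕ) / ((j : ℕ)! : ℝ) := by
      have hfib := Finset.prod_fiberwise_of_maps_to
        (g := f) (s := (Finset.univ : Finset (Fin N))) (t := (Finset.univ : Finset (Fin D)))
        (fun k _ => Finset.mem_univ _) (fun k => S (f k))
      calc ∏ l, S l ^ n l
          = ∏ l, ∏ k ∈ Finset.univ.filter (fun k => f k = l), S (f k) := by
            refine Finset.prod_congr rfl fun l _ => ?_
            rw [Finset.prod_congr rfl (fun k hk => by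
              rw [(Finset.mem_filter.mp hk).2] : ∀ k ∈ _, S (f k) = S l)]
            rw [Finset.prod_const, hn l, hfilter l]
        _ = ∏ k, S (f k) := hfib
        _ = ∏ k, ∑ j : Fin D, Qp (j : ℕ) (z k) * v ^ (j : ℕ) / ((j : ℕ)! : ℝ) := by
            refine Finset.prod_congr rfl fun k _ => ?_
            rw [hS]
            refine Finset.sum_congr rfl fun j _ => ?_
            rw [hfz k]
            show v ^ (j : ℕ) / ((j : ℕ)! : ℝ) * Qp (j : ℕ) (ζ (f k))
              = Qp (j : ℕ) (ζ (f k)) * v ^ (j : ℕ) / ((j : ℕ)! : ℝ)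
            ring
    rw [← hL, hR, hgroup]
  have part1 : ∀ v : ℝ,
      ∑ x ∈ Finset.Nat.antidiagonalTuple D N,
          ((Nat.multinomial Finset.univ n : ℝ))⁻¹ *
            (Nat.multinomial Finset.univ x : ℝ) * QKgen D u n x *
            (v ^ (∑ j : Fin D, (j : ℕ) * x j) / ∏ j : Fin D, (((j : ℕ)! : ℝ)) ^ x j) =
        ∏ k, ∑ j : Fin D, Qp (j : ℕ) (z k) * v ^ (j : ℕ) / ((j : ℕ)! : ℝ) := by
    intro v
    have := key v
    calc ∑ x ∈ Finset.Nat.antidiagonalTuple D N,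
          ((Nat.multinomial Finset.univ n : ℝ))⁻¹ *
            (Nat.multinomial Finset.univ x : ℝ) * QKgen D u n x *
            (v ^ (∑ j : Fin D, (j : ℕ) * x j) / ∏ j : Fin D, (((j : ℕ)! : ℝ)) ^ x j)
        = ((Nat.multinomial Finset.univ n : ℝ))⁻¹ *
            ∑ x ∈ Finset.Nat.antidiagonalTuple D N,
              (Nat.multinomial Finset.univ x : ℝ) * QKgen D u n x *
                (v ^ (∑ j : Fin D, (j : ℕ) * x j) /
                  ∏ j : Fin D, (((j : ℕ)! : ℝ)) ^ x j) := by
          rw [Finset.mul_sum]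
          exact Finset.sum_congr rfl fun x _ => by ring
      _ = ∏ k, ∑ j : Fin D, Qp (j : ℕ) (z k) * v ^ (j : ℕ) / ((j : ℕ)! : ℝ) := by
          rw [this, ← mul_assoc, inv_mul_cancel₀ hmultn_ne, one_mul]
  refine ⟨part1, ?_⟩
  intro m hm
  set P : Polynomial ℝ := ∑ x ∈ Finset.Nat.antidiagonalTuple D N,
      Polynomial.C (((Nat.multinomial Finset.univ n : ℝ))⁻¹ *
        (Nat.multinomial Finset.univ x : ℝ) * QKgen D u n x /
          ∏ j : Fin D, (((j : ℕ)! : ℝ)) ^ x j) *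
        Polynomial.X ^ (∑ j : Fin D, (j : ℕ) * x j) with hP
  set Qq : Polynomial ℝ := ∏ k, ∑ j : Fin D,
      Polynomial.C (Qp (j : ℕ) (z k) / ((j : ℕ)! : ℝ)) * Polynomial.X ^ (j : ℕ) with hQq
  have hPQ : P = Qq := by
    apply Polynomial.funext
    intro v
    have e1 : Polynomial.eval v P =
        ∑ x ∈ Finset.Nat.antidiagonalTuple D N,
          ((Nat.multinomial Finset.univ n : ℝ))⁻¹ *
            (Nat.multinomial Finset.univ x : ℝ) * QKgen D u n x *
            (v ^ (∑ j : Fin D, (j : ℕ) * x j) /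
              ∏ j : Fin D, (((j : ℕ)! : ℝ)) ^ x j) := by
      rw [hP, Polynomial.eval_finset_sum]
      refine Finset.sum_congr rfl fun x _ => ?_
      rw [Polynomial.eval_mul, Polynomial.eval_C, Polynomial.eval_pow, Polynomial.eval_X]
      ring
    have e2 : Polynomial.eval v Qq =
        ∏ k, ∑ j : Fin D, Qp (j : ℕ) (z k) * v ^ (j : ℕ) / ((j : ℕ)! : ℝ) := by
      rw [hQq, Polynomial.eval_prod]
      refine Finset.prod_congr rfl fun k _ => ?_
      rw [Polynomial.eval_finset_sum]
      refine Finset.sum_congr rfl fun j _ => ?_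
      rw [Polynomial.eval_mul, Polynomial.eval_C, Polynomial.eval_pow, Polynomial.eval_X]
      ring
    rw [e1, e2, part1 v]
  have hcoeffP : Polynomial.coeff P m =
      ∑ x ∈ (Finset.Nat.antidiagonalTuple D N).filter
          (fun x => ∑ j : Fin D, (j : ℕ) * x j = m),
        ((Nat.multinomial Finset.univ n : ℝ))⁻¹ *
          (Nat.multinomial Finset.univ x : ℝ) * QKgen D u n x /
            ∏ j : Fin D, (((j : ℕ)! : ℝ)) ^ x j := by
    rw [hP, Polynomial.finset_sum_coeff, Finset.sum_filter]
    refine Finset.sum_congr rfl fun x _ => ?_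
    rw [Polynomial.coeff_C_mul, Polynomial.coeff_X_pow]
    by_cases hd : (∑ j : Fin D, (j : ℕ) * x j) = m
    · simp [hd]
    · simp [hd, Ne.symm hd]
  have goalform : ((Nat.multinomial Finset.univ n : ℝ))⁻¹ *
      ∑ x ∈ (Finset.Nat.antidiagonalTuple D N).filter
          (fun x => ∑ j : Fin D, (j : ℕ) * x j = m),
        (Nat.multinomial Finset.univ x : ℝ) *
          ((m ! : ℝ) / ∏ j : Fin D, (((j : ℕ)! : ℝ)) ^ x j) *
          QKgen D u n x
      = (m ! : ℝ) * Polynomial.coeff P m := by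
    rw [hcoeffP, Finset.mul_sum, Finset.mul_sum]
    refine Finset.sum_congr rfl fun x _ => ?_
    ring
  have hEprod : ∀ s : Finset (Fin N), E (∑ k ∈ s, z k) = ∏ k ∈ s, E (z k) := by
    intro s
    induction s using Finset.induction_on with
    | empty => simpa using hE0
    | @insert a s ha ih => rw [Finset.sum_insert ha, Finset.prod_insert ha, hEadd, ih]
  have hfact : h ^ N * E (∑ k, z k) = ∏ k : Fin N, (h * E (z k)) := by
    rw [Finset.prod_mul_distrib, Finset.prod_const, Finset.card_univ, Fintype.card_fin,
      hEprod]
  have hQqcoe : (Qq : PowerSeries ℝ) = ∏ k : Fin N,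
      ((∑ j : Fin D, Polynomial.C (Qp (j : ℕ) (z k) / ((j : ℕ)! : ℝ)) *
        Polynomial.X ^ (j : ℕ) : Polynomial ℝ) : PowerSeries ℝ) := by
    rw [hQq, ← Polynomial.coeToPowerSeries.ringHom_apply, map_prod]
    rfl
  have hcoeffQq : PowerSeries.coeff m (Qq : PowerSeries ℝ)
      = PowerSeries.coeff m (∏ k : Fin N, (h * E (z k))) := by
    rw [hQqcoe]
    refine lowcoeff m Finset.univ _ _ ?_ m le_rfl
    intro k _ i hi
    have hiD : i < D := lt_of_le_of_lt hi hm
    rw [Polynomial.coeff_coe, hMeixner, Polynomial.finset_sum_coeff]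
    simp only [Polynomial.coeff_C_mul, Polynomial.coeff_X_pow, mul_ite, mul_one, mul_zero]
    have hiff : ∀ j : Fin D, (i = (j : ℕ)) ↔ (j = (⟨i, hiD⟩ : Fin D)) := fun j => by
      constructor
      · intro hj; exact Fin.ext hj.symm
      · intro hj; rw [hj]
    rw [Finset.sum_congr rfl fun j _ => if_congr (hiff j) rfl rfl,
      Finset.sum_ite_eq' Finset.univ (⟨i, hiD⟩ : Fin D), if_pos (Finset.mem_univ _)]
  rw [goalform, hPQ, ← Polynomial.coeff_coe, hcoeffQq, ← hfact]
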